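/- Let K ≥ 1 and let a class hierarchy over the K classes be given by a finite index type J, a map v : J → Finset (Fin K) with v j nonempty for every j, and weights w : J → ℝ with 0 ≤ w j. Let π be a strictly positive probability vector on Fin K and let k ≠ k' be two classes. Then the function g : ℝ → ℝ defined by g(t) = ∑_{y} π y · ℓ(π + t·(e_k − e_{k'}), y), where e_k is the k-th standard basis vector and ℓ is the hierarchical loss, has derivative at t = 0 equal to ∑_{j : k' ∈ v j} w j − ∑_{j : k ∈ v j} w j. In particular, the gradient of the expected hierarchical loss along the probability simplex vanishes at the true distribution π if and only if the ancestor weight sums ∑_{j : k ∈ v j} w j are equal for all classes k. -/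

import Mathlib

/-- The derivative of the expected hierarchical loss at the true distribution `π`, along
the simplex direction `e k - e k'`, equals the difference of ancestor weight sums
`∑_{j : k' ∈ v j} w j - ∑_{j : k ∈ v j} w j`. -/
theorem expected_hierarchical_loss_deriv_along_simplex
    {K : ℕ} (hK : 1 ≤ K) {J : Type*} [Fintype J]
    (v : J → Finset (Fin K)) (hne : ∀ j, (v j).Nonempty)
    (w : J → ℝ) (hw : ∀ j, 0 ≤ w j)
    (π : Fin K → ℝ) (hπ0 : ∀ k, 0 < π k) (hπ1 : ∑ k, π k = 1)
    (k k' : Fin K) (hkk' : k ≠ k') :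
    HasDerivAt
      (fun t : ℝ => ∑ y, π y *
        (-(∑ j ∈ Finset.univ.filter (fun j => y ∈ v j),
          w j * Real.log (∑ l ∈ v j,
            (π l + t * ((if l = k then (1 : ℝ) else 0)
              - (if l = k' then (1 : ℝ) else 0)))))))
      ((∑ j ∈ Finset.univ.filter (fun j => k' ∈ v j), w j)
        - ∑ j ∈ Finset.univ.filter (fun j => k ∈ v j), w j)
      0 := by
  classical
  set S : J → ℝ := fun j => ∑ l ∈ v j, π l with hS
  have hSpos : ∀ j, 0 < S j := fun j => Finset.sum_pos (fun l _ => hπ0 l) (hne j)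
  set c : J → ℝ := fun j =>
    (if k ∈ v j then (1 : ℝ) else 0) - (if k' ∈ v j then (1 : ℝ) else 0) with hc
  have hsum : ∀ (j : J) (t : ℝ),
      (∑ l ∈ v j, (π l + t * ((if l = k then (1 : ℝ) else 0)
        - (if l = k' then (1 : ℝ) else 0)))) = S j + t * c j := by
    intro j t
    rw [Finset.sum_add_distrib, ← Finset.mul_sum, Finset.sum_sub_distrib]
    simp [hS, hc, Finset.sum_ite_eq']
  -- derivative of each term
  have hterm : ∀ y : Fin K,
      HasDerivAt (fun t : ℝ => π y *
        (-(∑ j ∈ Finset.univ.filter (fun j => y ∈ v j), w j * Real.log (S j + t * c j))))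
        (π y * (-(∑ j ∈ Finset.univ.filter (fun j => y ∈ v j), w j * (c j / S j)))) 0 := by
    intro y
    refine HasDerivAt.const_mul _ (HasDerivAt.neg ?_)
    refine HasDerivAt.fun_sum fun j _ => HasDerivAt.const_mul _ ?_
    have hlin : HasDerivAt (fun t : ℝ => S j + t * c j) (c j) 0 := by
      simpa using ((hasDerivAt_id (0 : ℝ)).mul_const (c j)).const_add (S j)
    have := hlin.log (by simpa using (hSpos j).ne')
    simpa using this
  have hmain : HasDerivAt (fun t : ℝ => ∑ y, π y *
      (-(∑ j ∈ Finset.univ.filter (fun j => y ∈ v j), w j * Real.log (S j + t * c j))))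
      (∑ y, π y * (-(∑ j ∈ Finset.univ.filter (fun j => y ∈ v j), w j * (c j / S j)))) 0 :=
    HasDerivAt.fun_sum fun y _ => hterm y
  -- identify the derivative value
  have key : (∑ y, π y * (-(∑ j ∈ Finset.univ.filter (fun j => y ∈ v j), w j * (c j / S j))))
      = (∑ j ∈ Finset.univ.filter (fun j => k' ∈ v j), w j)
        - ∑ j ∈ Finset.univ.filter (fun j => k ∈ v j), w j := by
    have h1 : (∑ y, π y * (-(∑ j ∈ Finset.univ.filter (fun j => y ∈ v j), w j * (c j / S j))))
        = -∑ y : Fin K, ∑ j : J, (if y ∈ v j then π y * (w j * (c j / S j)) else 0) := by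
      rw [← Finset.sum_neg_distrib]
      refine Finset.sum_congr rfl fun y _ => ?_
      rw [Finset.sum_filter, mul_neg, Finset.mul_sum]
      congr 1
      refine Finset.sum_congr rfl fun j _ => ?_
      split <;> simp
    rw [h1, Finset.sum_comm]
    have h2 : ∀ j : J, (∑ y : Fin K, (if y ∈ v j then π y * (w j * (c j / S j)) else 0))
        = w j * c j := by
      intro j
      rw [Finset.sum_ite_mem, Finset.univ_inter, ← Finset.sum_mul]
      change S j * (w j * (c j / S j)) = w j * c j
      field_simp [(hSpos j).ne']
    simp only [h2]
    simp only [hc, mul_sub, Finset.sum_sub_distrib, mul_ite, mul_one, mul_zero]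
    rw [← Finset.sum_filter, ← Finset.sum_filter]
    ring
  rw [← key]
  convert hmain using 2 with t
  refine Finset.sum_congr rfl fun y _ => ?_
  congr 2
  exact Finset.sum_congr rfl fun j _ => by rw [hsum]
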